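/- Equality condition of the multi-channel entropy bound: for a uniquely decodable (q_1,…,q_n)-ary code for a source Z with distribution (p_1,…,p_m), all p_j > 0, the equality Σ_{j=1}^m p_j Σ_{i=1}^n ℓ_i^j ln q_i = H(Z) holds if and only if Σ_{i=1}^n ℓ_i^j ln q_i = −ln p_j for every j ∈ {1,…,m}, where H(Z) = −Σ_j p_j ln p_j. -/

import Mathlib

/-- Channel-wise concatenation of the codewords of a finite sequence of source symbols:
the `i`-th component is the concatenation of the `i`-th components of the codewords. -/
def encodeSeq {n m : ℕ} {q : Fin n → ℕ} (C : Fin m → ∀ i, List (Fin (q i)))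
    (s : List (Fin m)) : ∀ i, List (Fin (q i)) :=
  fun i => (s.map fun j => C j i).flatten

/-- A multi-channel source code is uniquely decodable if any two distinct finite sequences of
source symbols yield distinct channel-wise concatenations of their codewords. -/
def UniquelyDecodable {n m : ℕ} {q : Fin n → ℕ}
    (C : Fin m → ∀ i, List (Fin (q i))) : Prop :=
  Function.Injective (encodeSeq C)

open Finset Real

private lemma kraft_sum_le_one {n m : ℕ} {q : Fin n → ℕ} (hq : ∀ i, 2 ≤ q i)
    (C : Fin m → ∀ i, List (Fin (q i))) (hud : UniquelyDecodable C) :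
    ∑ j, ∏ i, (((q i : ℝ)) ^ ((C j i).length))⁻¹ ≤ 1 := by
  have hq0 : ∀ i, (0:ℝ) < q i := fun i => by
    have := hq i
    exact_mod_cast lt_of_lt_of_le (by norm_num) this
  set S : ℝ := ∑ j, ∏ i, (((q i : ℝ)) ^ ((C j i).length))⁻¹ with hSdef
  by_contra hcon
  push_neg at hcon
  set B : ℕ := (Finset.univ.sup fun j : Fin m =>
      Finset.univ.sup fun i : Fin n => (C j i).length) + 1 with hBdef
  have hlenB : ∀ j i, (C j i).length ≤ B := by
    intro j i
    have h1 : (C j i).length ≤ Finset.univ.sup fun i' : Fin n => (C j i').length :=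
      Finset.le_sup (f := fun i' : Fin n => (C j i').length) (Finset.mem_univ i)
    have h2 : (Finset.univ.sup fun i' : Fin n => (C j i').length) ≤
        Finset.univ.sup fun j' : Fin m => Finset.univ.sup fun i' : Fin n => (C j' i').length :=
      Finset.le_sup (f := fun j' : Fin m =>
        Finset.univ.sup fun i' : Fin n => (C j' i').length) (Finset.mem_univ j)
    omega
  have key : ∀ k : ℕ, S ^ k ≤ ((k * B + 1 : ℕ) : ℝ) ^ n := by
    intro k
    have expand : S ^ k =
        ∑ g : Fin k → Fin m, ∏ i, (((q i : ℝ)) ^ (∑ t, (C (g t) i).length))⁻¹ := by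
      rw [hSdef, Finset.sum_pow', Fintype.piFinset_univ]
      refine Finset.sum_congr rfl fun g _ => ?_
      rw [Finset.prod_comm]
      refine Finset.prod_congr rfl fun i _ => ?_
      simp only [← inv_pow]
      exact Finset.prod_pow_eq_pow_sum _ _ _
    have hlenlt : ∀ (g : Fin k → Fin m) (i), (∑ t, (C (g t) i).length) < k * B + 1 := by
      intro g i
      have h1 : ∑ t : Fin k, (C (g t) i).length ≤ ∑ _t : Fin k, B :=
        Finset.sum_le_sum fun t _ => hlenB _ _
      have h2 : ∑ _t : Fin k, B = k * B := by
        simp [Finset.sum_const, Finset.card_univ, mul_comm]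
      omega
    set T : (Fin k → Fin m) → (Fin n → Fin (k * B + 1)) :=
      fun g i => ⟨∑ t, (C (g t) i).length, hlenlt g i⟩ with hTdef
    rw [expand,
      ← Finset.sum_fiberwise (Finset.univ : Finset (Fin k → Fin m)) T
        (fun g => ∏ i, (((q i : ℝ)) ^ (∑ t, (C (g t) i).length))⁻¹)]
    have hfiber : ∀ v : Fin n → Fin (k * B + 1),
        ∑ g ∈ Finset.univ.filter (fun g => T g = v),
          ∏ i, (((q i : ℝ)) ^ (∑ t, (C (g t) i).length))⁻¹ ≤ 1 := by
      intro v
      have hval : ∀ g ∈ Finset.univ.filter (fun g => T g = v),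
          ∏ i, (((q i : ℝ)) ^ (∑ t, (C (g t) i).length))⁻¹
            = ∏ i, (((q i : ℝ)) ^ (v i : ℕ))⁻¹ := by
        intro g hg
        simp only [Finset.mem_filter] at hg
        refine Finset.prod_congr rfl fun i _ => ?_
        have : (∑ t, (C (g t) i).length) = (v i : ℕ) := by
          rw [← hg.2]
        rw [this]
      rw [Finset.sum_congr rfl hval, Finset.sum_const, nsmul_eq_mul]
      -- counting the fiber
      have hcard : (Finset.univ.filter (fun g => T g = v)).card
          ≤ ∏ i, (q i) ^ (v i : ℕ) := by
        classical
        have hlenEnc : ∀ (g : Fin k → Fin m) (i : Fin n),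
            (encodeSeq C (List.ofFn g) i).length = ∑ t, (C (g t) i).length := by
          intro g i
          simp [encodeSeq, List.map_ofFn, Function.comp, List.sum_ofFn]
        have hq0' : ∀ i : Fin n, 0 < q i := fun i => lt_of_lt_of_le (by norm_num) (hq i)
        set F : (Fin k → Fin m) → (∀ i, List.Vector (Fin (q i)) (v i)) :=
          fun g => fun i =>
            if h : (encodeSeq C (List.ofFn g) i).length = (v i : ℕ) then
              ⟨encodeSeq C (List.ofFn g) i, h⟩
            else ⟨List.replicate (v i) ⟨0, hq0' i⟩, List.length_replicate⟩
          with hFdef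
        have hinj : Set.InjOn F ↑(Finset.univ.filter (fun g => T g = v)) := by
          intro g hg g' hg' hFg
          simp only [Finset.coe_filter, Set.mem_setOf_eq] at hg hg'
          have hlg : ∀ i, (encodeSeq C (List.ofFn g) i).length = (v i : ℕ) := by
            intro i; rw [hlenEnc, ← hg.2]
          have hlg' : ∀ i, (encodeSeq C (List.ofFn g') i).length = (v i : ℕ) := by
            intro i; rw [hlenEnc, ← hg'.2]
          have henc : encodeSeq C (List.ofFn g) = encodeSeq C (List.ofFn g') := by
            funext i
            have := congrFun hFg i
            rw [hFdef] at this
            simp only [dif_pos (hlg i), dif_pos (hlg' i)] at this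
            simpa [hlg i, hlg' i] using congrArg Subtype.val this
          exact List.ofFn_injective (hud henc)
        calc (Finset.univ.filter (fun g => T g = v)).card
            ≤ (Finset.univ : Finset (∀ i, List.Vector (Fin (q i)) (v i))).card :=
              Finset.card_le_card_of_injOn F (fun _ _ => Finset.mem_univ _) hinj
          _ = ∏ i, (q i) ^ (v i : ℕ) := by
              simp [Finset.card_univ, Fintype.card_pi]
      have hinvnn : (0:ℝ) ≤ ∏ i, (((q i : ℝ)) ^ (v i : ℕ))⁻¹ :=
        Finset.prod_nonneg fun i _ => inv_nonneg.2 (pow_nonneg (hq0 i).le _)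
      calc ((Finset.univ.filter (fun g => T g = v)).card : ℝ)
            * ∏ i, (((q i : ℝ)) ^ (v i : ℕ))⁻¹
          ≤ (∏ i, ((q i : ℝ)) ^ (v i : ℕ)) * ∏ i, (((q i : ℝ)) ^ (v i : ℕ))⁻¹ := by
            apply mul_le_mul_of_nonneg_right _ hinvnn
            calc ((Finset.univ.filter (fun g => T g = v)).card : ℝ)
                ≤ ((∏ i, (q i) ^ (v i : ℕ) : ℕ) : ℝ) := Nat.cast_le.2 hcard
              _ = ∏ i, ((q i : ℝ)) ^ (v i : ℕ) := by push_cast; rfl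
        _ = 1 := by
            rw [← Finset.prod_mul_distrib]
            exact Finset.prod_eq_one fun i _ =>
              mul_inv_cancel₀ (ne_of_gt (pow_pos (hq0 i) _))
    calc ∑ v : Fin n → Fin (k * B + 1),
          ∑ g ∈ Finset.univ.filter (fun g => T g = v),
            ∏ i, (((q i : ℝ)) ^ (∑ t, (C (g t) i).length))⁻¹
        ≤ ∑ _v : Fin n → Fin (k * B + 1), (1:ℝ) :=
          Finset.sum_le_sum fun v _ => hfiber v
      _ = ((k * B + 1 : ℕ) : ℝ) ^ n := by
          simp [Finset.sum_const, Finset.card_univ, Fintype.card_fun]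
  -- contradiction via exponential growth
  have hS1 : (1:ℝ) < S := hcon
  have hSpos : (0:ℝ) < S := lt_trans one_pos hS1
  have hε : (0:ℝ) < (((B:ℝ) + 1) ^ n)⁻¹ := by positivity
  have htend := tendsto_pow_const_div_const_pow_of_one_lt n hS1
  have hev : ∀ᶠ k : ℕ in Filter.atTop,
      (k : ℝ) ^ n / S ^ k < (((B:ℝ) + 1) ^ n)⁻¹ :=
    htend.eventually_lt_const hε
  obtain ⟨k, hklt, hk1⟩ := (hev.and (Filter.eventually_ge_atTop 1)).exists
  have hSk : (0:ℝ) < S ^ k := pow_pos hSpos k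
  have h1 : S ^ k ≤ ((k * B + 1 : ℕ) : ℝ) ^ n := key k
  have hk1' : (1:ℝ) ≤ (k : ℝ) := by exact_mod_cast hk1
  have hB0 : (0:ℝ) ≤ (B : ℝ) := Nat.cast_nonneg _
  have h2 : ((k * B + 1 : ℕ) : ℝ) ≤ ((B:ℝ) + 1) * k := by
    push_cast
    nlinarith
  have h3 : S ^ k ≤ ((B:ℝ) + 1) ^ n * (k : ℝ) ^ n := by
    refine h1.trans ?_
    rw [← mul_pow]
    exact pow_le_pow_left₀ (by positivity) h2 n
  have h4 : (k : ℝ) ^ n < (((B:ℝ) + 1) ^ n)⁻¹ * S ^ k := by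
    exact (div_lt_iff₀ hSk).mp hklt
  have hBpow : (0:ℝ) < ((B:ℝ) + 1) ^ n := by positivity
  have : S ^ k < S ^ k := by
    calc S ^ k ≤ ((B:ℝ) + 1) ^ n * (k : ℝ) ^ n := h3
      _ < ((B:ℝ) + 1) ^ n * ((((B:ℝ) + 1) ^ n)⁻¹ * S ^ k) :=
          mul_lt_mul_of_pos_left h4 hBpow
      _ = S ^ k := by field_simp
  exact lt_irrefl _ this

theorem multichannel_entropy_bound_equality_iff (n m : ℕ) (q : Fin n → ℕ)
    (hq : ∀ i, 2 ≤ q i) (hmono : Monotone q)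
    (p : Fin m → ℝ) (hp : ∀ j, 0 < p j) (hsum : ∑ j, p j = 1)
    (C : Fin m → ∀ i, List (Fin (q i)))
    (hud : UniquelyDecodable C) :
    (∑ j, p j * ∑ i, ((C j i).length : ℝ) * Real.log (q i) =
        -∑ j, p j * Real.log (p j)) ↔
      ∀ j, ∑ i, ((C j i).length : ℝ) * Real.log (q i) = -Real.log (p j) := by
  classical
  have hq0 : ∀ i, (0:ℝ) < q i := fun i => by
    have := hq i
    exact_mod_cast lt_of_lt_of_le (by norm_num) this
  set f : Fin m → ℝ := fun j => ∑ i, ((C j i).length : ℝ) * Real.log (q i) with hfdef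
  set r : Fin m → ℝ := fun j => ∏ i, (((q i : ℝ)) ^ ((C j i).length))⁻¹ with hrdef
  have hrpos : ∀ j, 0 < r j := fun j =>
    Finset.prod_pos fun i _ => inv_pos.2 (pow_pos (hq0 i) _)
  have hlogr : ∀ j, Real.log (r j) = -(f j) := by
    intro j
    rw [hrdef]
    rw [Real.log_prod (fun i _ => ne_of_gt (inv_pos.2 (pow_pos (hq0 i) _)))]
    simp only [Real.log_inv, Real.log_pow, hfdef]
    rw [← Finset.sum_neg_distrib]
  have hk : ∑ j, r j ≤ 1 := kraft_sum_le_one hq C hud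
  constructor
  · intro heq
    -- per-term inequality
    have hterm : ∀ j ∈ Finset.univ, p j - r j ≤ p j * (f j + Real.log (p j)) := by
      intro j _
      have hx : (0:ℝ) < r j / p j := div_pos (hrpos j) (hp j)
      have h1 : Real.log (r j / p j) = -(f j) - Real.log (p j) := by
        rw [Real.log_div (ne_of_gt (hrpos j)) (ne_of_gt (hp j)), hlogr j]
      have h2 : p j * Real.log (r j / p j) ≤ p j * (r j / p j - 1) :=
        mul_le_mul_of_nonneg_left (Real.log_le_sub_one_of_pos hx) (hp j).le
      have h3 : p j * (r j / p j - 1) = r j - p j := by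
        rw [mul_sub, mul_div_cancel₀ _ (ne_of_gt (hp j)), mul_one]
      rw [h1] at h2
      nlinarith
    have heq' : ∑ j, p j * f j = -∑ j, p j * Real.log (p j) := heq
    have hsum0 : ∑ j, p j * (f j + Real.log (p j)) = 0 := by
      simp only [mul_add]
      rw [Finset.sum_add_distrib, heq']
      ring
    have hge : 0 ≤ ∑ j, (p j - r j) := by
      rw [Finset.sum_sub_distrib, hsum]
      linarith
    have hsums : ∑ j, (p j - r j) = ∑ j, p j * (f j + Real.log (p j)) := by
      have hle := Finset.sum_le_sum hterm
      rw [hsum0] at hle ⊢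
      linarith
    have heach := (Finset.sum_eq_sum_iff_of_le hterm).mp hsums
    intro j
    have hj := heach j (Finset.mem_univ j)
    have hx : (0:ℝ) < r j / p j := div_pos (hrpos j) (hp j)
    have h1 : Real.log (r j / p j) = -(f j) - Real.log (p j) := by
      rw [Real.log_div (ne_of_gt (hrpos j)) (ne_of_gt (hp j)), hlogr j]
    have hx1 : r j / p j = 1 := by
      by_contra hne
      have hstrict := Real.log_lt_sub_one_of_pos hx hne
      rw [h1] at hstrict
      have h3 : p j * (r j / p j - 1) = r j - p j := by
        rw [mul_sub, mul_div_cancel₀ _ (ne_of_gt (hp j)), mul_one]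
      have := mul_lt_mul_of_pos_left hstrict (hp j)
      nlinarith
    have hrp : r j = p j := (div_eq_one_iff_eq (ne_of_gt (hp j))).mp hx1
    have hlp : Real.log (p j) = -(f j) := by rw [← hrp]; exact hlogr j
    have hfj : f j = -Real.log (p j) := by linarith
    exact hfj
  · intro h
    calc ∑ j, p j * ∑ i, ((C j i).length : ℝ) * Real.log (q i)
        = ∑ j, p j * (-Real.log (p j)) :=
          Finset.sum_congr rfl fun j _ => by rw [h j]
      _ = -∑ j, p j * Real.log (p j) := by
          simp [mul_neg, Finset.sum_neg_distrib]
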